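/- Under the hypotheses of the previous statement, the continuous function φ(p) = a(p)·dist(p,Γ), restricted to the closure of a connected component D of the complement of Γ, cannot have a local minimum at any interior point p₀ ∈ D at which 0 < φ(p₀) < ε₀ = min{1/2, A²/(2A₁)}. -/

import Mathlib

theorem stmt_6 (a : EuclideanSpace ℝ (Fin 2) → ℝ) (A Abar A₁ : ℝ)
    (hA : 0 < A) (ha : ContDiff ℝ 1 a)
    (hb : ∀ p, A ≤ a p ∧ a p ≤ Abar)
    (hgr : ∀ p, ‖gradient a p‖ ≤ A₁)
    (Γ : Set (EuclideanSpace ℝ (Fin 2))) (hΓc : IsClosed Γ) (hΓne : Γ.Nonempty)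
    (D : Set (EuclideanSpace ℝ (Fin 2))) (hD : IsOpen D) (hDΓ : D ∩ Γ = ∅)
    (p₀ : EuclideanSpace ℝ (Fin 2)) (hp₀ : p₀ ∈ D)
    (h1 : 0 < a p₀ * Metric.infDist p₀ Γ)
    (h2 : a p₀ * Metric.infDist p₀ Γ < min (1/2) (A ^ 2 / (2 * A₁))) :
    ¬ IsLocalMinOn (fun p => a p * Metric.infDist p Γ) (closure D) p₀ := by
  have hA1 : 0 ≤ A₁ := le_trans (norm_nonneg _) (hgr p₀)
  rcases eq_or_lt_of_le hA1 with hA10 | hA1p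
  · exfalso
    have : A ^ 2 / (2 * A₁) = 0 := by rw [← hA10]; simp
    have := min_le_right (1/2 : ℝ) (A ^ 2 / (2 * A₁))
    linarith
  -- basic facts
  have hap₀ : A ≤ a p₀ := (hb p₀).1
  set d₀ := Metric.infDist p₀ Γ with hd₀
  have hd₀pos : 0 < d₀ := by
    rcases le_or_gt d₀ 0 with h | h
    · exfalso; nlinarith
    · exact h
  have hkey : 2 * A₁ * d₀ < a p₀ := by
    have h2' : a p₀ * d₀ < A ^ 2 / (2 * A₁) :=
      lt_of_lt_of_le h2 (min_le_right _ _)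
    have : a p₀ * d₀ * (2 * A₁) < A ^ 2 := by
      rw [← lt_div_iff₀ (by positivity)]; exact h2'
    nlinarith [sq_nonneg (a p₀ - A)]
  -- nearest point
  obtain ⟨q, hqΓ, hq⟩ := hΓc.exists_infDist_eq_dist hΓne p₀
  have hdq : d₀ = ‖q - p₀‖ := by
    rw [hd₀, hq, dist_eq_norm, norm_sub_rev]
  -- lipschitz bound for a
  have hlip : ∀ x y : EuclideanSpace ℝ (Fin 2), ‖a y - a x‖ ≤ A₁ * ‖y - x‖ := by
    intro x y
    apply Convex.norm_image_sub_le_of_norm_fderiv_le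
      (fun z _ => (ha.differentiable one_ne_zero).differentiableAt)
      (fun z _ => ?_) convex_univ (Set.mem_univ x) (Set.mem_univ y)
    have : ‖fderiv ℝ a z‖ = ‖gradient a z‖ := by
      simp [gradient]
    rw [this]; exact hgr z
  intro hmin
  have hclos : closure D ∈ nhds p₀ :=
    Filter.mem_of_superset (hD.mem_nhds hp₀) subset_closure
  have hmin' : ∀ᶠ x in nhds p₀,
      a p₀ * Metric.infDist p₀ Γ ≤ a x * Metric.infDist x Γ := by
    have := hmin
    rw [IsLocalMinOn, IsMinFilter, nhdsWithin_eq_nhds.mpr hclos] at this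
    exact this
  rw [Metric.eventually_nhds_iff] at hmin'
  obtain ⟨ε, hε, hball⟩ := hmin'
  -- choose s
  set s : ℝ := min 1 (ε / (2 * d₀)) with hs
  have hs0 : 0 < s := lt_min one_pos (by positivity)
  have hs1 : s ≤ 1 := min_le_left _ _
  set p := p₀ + s • (q - p₀) with hp
  have hdist : dist p p₀ = s * d₀ := by
    rw [dist_eq_norm, hp]
    simp only [add_sub_cancel_left, norm_smul, Real.norm_eq_abs, abs_of_pos hs0, hdq]
  have hdistε : dist p p₀ < ε := by
    have : s * d₀ ≤ (ε / (2 * d₀)) * d₀ :=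
      mul_le_mul_of_nonneg_right (min_le_right _ _) hd₀pos.le
    have h2' : (ε / (2 * d₀)) * d₀ = ε / 2 := by field_simp
    rw [hdist]; linarith
  have hle := hball hdistε
  -- upper bound on infDist p Γ
  have hinf : Metric.infDist p Γ ≤ (1 - s) * d₀ := by
    have h := Metric.infDist_le_dist_of_mem (x := p) hqΓ
    have : dist p q = (1 - s) * d₀ := by
      rw [dist_eq_norm, hp, hdq]
      have : p₀ + s • (q - p₀) - q = -((1 - s) • (q - p₀)) := by
        rw [sub_smul, one_smul]; abel
      rw [this, norm_neg, norm_smul, Real.norm_eq_abs, abs_of_nonneg (by linarith)]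
    linarith [this ▸ h]
  have hap : a p ≤ a p₀ + A₁ * (s * d₀) := by
    have h0 := hlip p₀ p
    have h' : ‖p - p₀‖ = s * d₀ := by rw [← dist_eq_norm]; exact hdist
    rw [h'] at h0
    have := (abs_le.mp (by rwa [Real.norm_eq_abs] at h0)).2
    linarith
  have hapos : 0 < a p := lt_of_lt_of_le hA (hb p).1
  have hineq : a p * Metric.infDist p Γ < a p₀ * d₀ := by
    have hb1 : a p * Metric.infDist p Γ ≤ a p * ((1 - s) * d₀) :=
      mul_le_mul_of_nonneg_left hinf hapos.le
    have hb2 : a p * ((1 - s) * d₀) ≤ (a p₀ + A₁ * (s * d₀)) * ((1 - s) * d₀) := by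
      apply mul_le_mul_of_nonneg_right hap
      have : 0 ≤ 1 - s := by linarith
      positivity
    have hb3 : (a p₀ + A₁ * (s * d₀)) * ((1 - s) * d₀) < a p₀ * d₀ := by
      have hneg : (1 - s) * (A₁ * d₀) - a p₀ < 0 := by
        nlinarith [mul_nonneg hA1 hd₀pos.le]
      have hmn := mul_neg_of_pos_of_neg (mul_pos hs0 hd₀pos) hneg
      nlinarith [hmn]
    linarith
  exact absurd hle (not_le.mpr hineq)
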